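/- Let $F = G S^*$ where $G, S \in \mathbb{C}^{n \times p}$ satisfy $S^* G = 0$. Then $F^2 = 0$, and the matrix $\cR = F + F^*$ satisfies $\|\cR\|_2 = \|F\|_2 = \|G S^*\|_2$. -/

import Mathlib

open Matrix

/-- Spectral (operator 2-) norm of a complex rectangular matrix. -/
noncomputable def specNorm {a b : ℕ} (A : Matrix (Fin a) (Fin b) ℂ) : ℝ :=
  ‖LinearMap.toContinuousLinearMap (Matrix.toEuclideanLin A)‖

section CstarLemmas

variable {A : Type*} [NormedRing A] [StarRing A] [CStarRing A]

lemma sa_norm_sq (x : A) (hx : star x = x) : ‖x * x‖ = ‖x‖ * ‖x‖ := by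
  rw [show x * x = star x * x from by rw [hx]]
  exact CStarRing.norm_star_mul_self

lemma key_ineq (a b : A) (ha : star a = a) (hb : star b = b)
    (hab : a * b = 0) (hba : b * a = 0) (k : ℕ) :
    ‖a + b‖ ^ (2 ^ k) ≤ ‖a‖ ^ (2 ^ k) + ‖b‖ ^ (2 ^ k) := by
  induction k generalizing a b with
  | zero => simpa using norm_add_le a b
  | succ k ih =>
      have hsum : star (a + b) = a + b := by rw [star_add, ha, hb]
      have hsq : (a + b) * (a + b) = a * a + b * b := by
        rw [mul_add, add_mul, add_mul, hab, hba]; abel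
      have h1 : ‖(a + b)‖ ^ 2 ^ (k + 1) = ‖a * a + b * b‖ ^ 2 ^ k := by
        rw [show (2:ℕ)^(k+1) = 2*2^k from by ring, pow_mul, sq, ← sa_norm_sq _ hsum, hsq]
      have h2 := ih (a * a) (b * b) (by rw [StarMul.star_mul, ha]) (by rw [StarMul.star_mul, hb])
        (by rw [mul_assoc, ← mul_assoc a b, hab, zero_mul, mul_zero])
        (by rw [mul_assoc, ← mul_assoc b a, hba, zero_mul, mul_zero])
      calc ‖a + b‖ ^ 2 ^ (k + 1) = ‖a * a + b * b‖ ^ 2 ^ k := h1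
        _ ≤ ‖a * a‖ ^ 2 ^ k + ‖b * b‖ ^ 2 ^ k := h2
        _ = ‖a‖ ^ 2 ^ (k + 1) + ‖b‖ ^ 2 ^ (k + 1) := by
            rw [sa_norm_sq a ha, sa_norm_sq b hb,
              show (2:ℕ)^(k+1) = 2^k*2 from pow_succ 2 k]; ring

lemma norm_add_star_of_sq_zero (a : A) (ha : a * a = 0) :
    ‖a + star a‖ = ‖a‖ := by
  set r := a + star a with hr
  have hstar2 : star a * star a = 0 := by rw [← StarMul.star_mul, ha, star_zero]
  have hr2 : r * r = a * star a + star a * a := by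
    rw [hr, mul_add, add_mul, add_mul, ha, hstar2]; abel
  have hrsa : star r = r := by rw [hr, star_add, star_star, add_comm]
  have hA : star (a * star a) = a * star a := by rw [StarMul.star_mul, star_star]
  have hB : star (star a * a) = star a * a := by rw [StarMul.star_mul, star_star]
  have hAB : (a * star a) * (star a * a) = 0 := by
    rw [mul_assoc, ← mul_assoc (star a), hstar2, zero_mul, mul_zero]
  have hBA : (star a * a) * (a * star a) = 0 := by
    rw [mul_assoc, ← mul_assoc a, ha, zero_mul, mul_zero]
  have hnA : ‖a * star a‖ = ‖a‖ * ‖a‖ := CStarRing.norm_self_mul_star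
  have hnB : ‖star a * a‖ = ‖a‖ * ‖a‖ := CStarRing.norm_star_mul_self
  have hr2norm : ‖r‖ * ‖r‖ = ‖a * star a + star a * a‖ := by
    rw [← sa_norm_sq r hrsa, hr2]
  -- lower bound: ‖a*star a + star a * a‖ ≥ ‖a‖²
  have hlow : ‖a‖ * ‖a‖ ≤ ‖r‖ * ‖r‖ := by
    rcases eq_or_ne ‖a‖ 0 with h0 | h0
    · rw [h0]; nlinarith [norm_nonneg r]
    · have h1 : (a * star a + star a * a) * (a * star a) = (a * star a) * (a * star a) := by
        rw [add_mul, hBA, add_zero]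
      have h2 : ‖(a * star a) * (a * star a)‖ = (‖a‖ * ‖a‖) * (‖a‖ * ‖a‖) := by
        rw [sa_norm_sq _ hA, hnA]
      have h3 : ‖(a * star a + star a * a) * (a * star a)‖
          ≤ ‖a * star a + star a * a‖ * (‖a‖ * ‖a‖) := by
        calc ‖(a * star a + star a * a) * (a * star a)‖
            ≤ ‖a * star a + star a * a‖ * ‖a * star a‖ := norm_mul_le _ _
          _ = ‖a * star a + star a * a‖ * (‖a‖ * ‖a‖) := by rw [hnA]
      rw [h1, h2] at h3
      have h0' : 0 < ‖a‖ := (norm_nonneg a).lt_of_ne (Ne.symm h0)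
      have hpos : 0 < ‖a‖ * ‖a‖ := mul_pos h0' h0'
      have := (mul_le_mul_iff_of_pos_right hpos).mp h3
      rw [hr2norm]; exact this
  -- upper bound
  have hup : ∀ k : ℕ, ‖r‖ ^ (2 ^ (k + 1)) ≤ 2 * ‖a‖ ^ (2 ^ (k + 1)) := by
    intro k
    have := key_ineq (a * star a) (star a * a) hA hB hAB hBA k
    have e1 : ‖r‖ ^ 2 ^ (k + 1) = ‖a * star a + star a * a‖ ^ 2 ^ k := by
      rw [pow_succ, pow_mul, ← hr2norm]; ring_nf
    have e2 : ‖a * star a‖ ^ 2 ^ k = ‖a‖ ^ 2 ^ (k + 1) := by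
      rw [hnA, ← sq, ← pow_mul, mul_comm 2, ← pow_succ]
    have e3 : ‖star a * a‖ ^ 2 ^ k = ‖a‖ ^ 2 ^ (k + 1) := by
      rw [hnB, ← sq, ← pow_mul, mul_comm 2, ← pow_succ]
    rw [e1]
    calc ‖a * star a + star a * a‖ ^ 2 ^ k
        ≤ ‖a * star a‖ ^ 2 ^ k + ‖star a * a‖ ^ 2 ^ k := this
      _ = 2 * ‖a‖ ^ 2 ^ (k + 1) := by rw [e2, e3]; ring
  have hge : ‖a‖ ≤ ‖r‖ := by
    nlinarith [norm_nonneg a, norm_nonneg r]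
  have hle : ‖r‖ ≤ ‖a‖ := by
    by_contra hcon
    push_neg at hcon
    rcases eq_or_ne ‖a‖ 0 with h0 | h0
    · have := hup 0
      simp [h0] at this
      rw [this, norm_zero, h0] at hcon; exact lt_irrefl _ hcon
    · have hapos : 0 < ‖a‖ := lt_of_le_of_ne (norm_nonneg a) (Ne.symm h0)
      set t : ℝ := ‖r‖ / ‖a‖ with ht
      have ht1 : 1 < t := (one_lt_div hapos).mpr hcon
      obtain ⟨m, hm⟩ := pow_unbounded_of_one_lt (2 : ℝ) ht1
      have hmle : m ≤ 2 ^ (m + 1) := le_trans (Nat.le_of_lt (Nat.lt_two_pow_self (n := m)))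
        (Nat.pow_le_pow_right (by norm_num) (Nat.le_succ m))
      have h4 : (2:ℝ) < t ^ (2 ^ (m + 1)) :=
        lt_of_lt_of_le hm (pow_le_pow_right₀ (le_of_lt ht1) hmle)
      have h5 : t ^ (2 ^ (m+1)) = ‖r‖ ^ (2 ^ (m+1)) / ‖a‖ ^ (2 ^ (m+1)) := by
        rw [ht, div_pow]
      have h6 := hup m
      have hapow : 0 < ‖a‖ ^ (2 ^ (m+1)) := pow_pos hapos _
      rw [h5, lt_div_iff₀ hapow] at h4
      linarith
  linarith

end CstarLemmas

/-- If `F = G Sᴴ` with `Sᴴ G = 0`, then `F² = 0` and the Hermitian matrix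
`F + Fᴴ` has the same spectral norm as `F`. -/
theorem stmt2 {n p : ℕ} (G S : Matrix (Fin n) (Fin p) ℂ)
    (h : Sᴴ * G = 0) :
    (G * Sᴴ) * (G * Sᴴ) = 0 ∧
    specNorm (G * Sᴴ + (G * Sᴴ)ᴴ) = specNorm (G * Sᴴ) := by
  have hF2 : (G * Sᴴ) * (G * Sᴴ) = 0 := by
    rw [Matrix.mul_assoc, ← Matrix.mul_assoc Sᴴ, h, Matrix.zero_mul, Matrix.mul_zero]
  refine ⟨hF2, ?_⟩
  have hspec : ∀ A : Matrix (Fin n) (Fin n) ℂ,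
      specNorm A = ‖Matrix.toEuclideanCLM (𝕜 := ℂ) A‖ := by
    intro A
    rfl
  rw [hspec, hspec]
  set e := Matrix.toEuclideanCLM (n := Fin n) (𝕜 := ℂ)
  have hmap : e ((G * Sᴴ) + (G * Sᴴ)ᴴ) = e (G * Sᴴ) + star (e (G * Sᴴ)) := by
    rw [map_add, ← Matrix.star_eq_conjTranspose, map_star]
  rw [hmap]
  exact norm_add_star_of_sq_zero _ (by rw [← _root_.map_mul, hF2, map_zero])
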